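/- Under δ_B-BHD and exact drift-corrected proximal descent (DANE+ with control variate h_{i,r} = ∇f_i(x^r) − ∇f(x^r)): if each local solution x_{i,r+1} satisfies F_{i,r}(x_{i,r+1}) ≤ F_{i,r}(x^r), where F_{i,r}(x) = f_i(x) − ⟨x, h_{i,r}⟩ + (λ/2)‖x − x^r‖², then f(x_{i,r+1}) + ((λ − δ_B)/2)‖x_{i,r+1} − x^r‖² ≤ f(x^r). -/

import Mathlib

open intervalIntegral in
lemma taylor_bound {E : Type*} [NormedAddCommGroup E] [InnerProductSpace ℝ E]
    [CompleteSpace E] (g : E → ℝ) (g' : E → E)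
    (hg : ∀ z, HasGradientAt g (g' z) z) (δ : ℝ) (hδ : 0 ≤ δ)
    (hlip : ∀ a b, ‖g' a - g' b‖ ≤ δ * ‖a - b‖) (x y : E) :
    |g y - g x - (inner ℝ (g' x) (y - x) : ℝ)| ≤ δ / 2 * ‖y - x‖ ^ 2 := by
  set Δ := y - x with hΔ
  have hcont : Continuous g' := by
    refine (LipschitzWith.of_dist_le_mul (K := ⟨δ, hδ⟩) ?_).continuous
    intro a b
    rw [dist_eq_norm, dist_eq_norm]; exact hlip a b
  have hderiv : ∀ t : ℝ, HasDerivAt (fun t : ℝ => g (x + t • Δ))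
      (inner ℝ (g' (x + t • Δ)) Δ : ℝ) t := by
    intro t
    have h1 : HasDerivAt (fun t : ℝ => x + t • Δ) Δ t := by
      simpa using ((hasDerivAt_id t).smul_const Δ).const_add x
    have h2 : HasFDerivAt g ((InnerProductSpace.toDual ℝ E) (g' (x + t • Δ))) (x + t • Δ) :=
      (hasGradientAt_iff_hasFDerivAt.mp (hg _))
    have h3 := h2.comp_hasDerivAt t h1
    simp at h3
    exact h3
  have hcont2 : Continuous fun t : ℝ => (inner ℝ (g' (x + t • Δ)) Δ : ℝ) :=
    (hcont.comp (by continuity)).inner continuous_const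
  have hint : ∫ t in (0:ℝ)..1, (inner ℝ (g' (x + t • Δ)) Δ : ℝ) = g y - g x := by
    have := integral_eq_sub_of_hasDerivAt (f := fun t : ℝ => g (x + t • Δ))
      (f' := fun t : ℝ => (inner ℝ (g' (x + t • Δ)) Δ : ℝ)) (a := 0) (b := 1)
      (fun t _ => hderiv t) (hcont2.intervalIntegrable _ _)
    simpa [hΔ] using this
  have key : g y - g x - (inner ℝ (g' x) Δ : ℝ)
      = ∫ t in (0:ℝ)..1, (inner ℝ (g' (x + t • Δ)) Δ - inner ℝ (g' x) Δ : ℝ) := by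
    rw [intervalIntegral.integral_sub (hcont2.intervalIntegrable _ _)
      (intervalIntegrable_const), hint, intervalIntegral.integral_const]
    simp
  rw [key]
  have bound : ∀ t ∈ Set.uIoc (0:ℝ) 1,
      ‖(inner ℝ (g' (x + t • Δ)) Δ - inner ℝ (g' x) Δ : ℝ)‖ ≤ δ * t * ‖Δ‖ ^ 2 := by
    intro t ht
    rw [Set.uIoc_of_le zero_le_one] at ht
    have h1 : (inner ℝ (g' (x + t • Δ)) Δ - inner ℝ (g' x) Δ : ℝ)
        = inner ℝ (g' (x + t • Δ) - g' x) Δ := by rw [inner_sub_left]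
    rw [h1]
    calc ‖(inner ℝ (g' (x + t • Δ) - g' x) Δ : ℝ)‖
        ≤ ‖g' (x + t • Δ) - g' x‖ * ‖Δ‖ := norm_inner_le_norm _ _
      _ ≤ δ * ‖(x + t • Δ) - x‖ * ‖Δ‖ := by
          gcongr; exact hlip _ _
      _ = δ * t * ‖Δ‖ ^ 2 := by
          rw [add_sub_cancel_left, norm_smul, Real.norm_eq_abs,
            abs_of_pos ht.1]
          ring
  have hcont3 : Continuous fun t : ℝ => δ * t * ‖Δ‖ ^ 2 := by fun_prop
  have hmain := intervalIntegral.norm_integral_le_of_norm_le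
    (f := fun t : ℝ => (inner ℝ (g' (x + t • Δ)) Δ - inner ℝ (g' x) Δ : ℝ))
    (g := fun t : ℝ => δ * t * ‖Δ‖ ^ 2) (μ := MeasureTheory.volume) (a := 0) (b := 1)
    zero_le_one (MeasureTheory.ae_of_all _ fun t ht => bound t (by rwa [Set.uIoc_of_le zero_le_one]))
    (hcont3.intervalIntegrable _ _)
  rw [Real.norm_eq_abs] at hmain
  refine hmain.trans ?_
  have hval : ∫ t in (0:ℝ)..1, δ * t * ‖Δ‖ ^ 2 = δ / 2 * ‖Δ‖ ^ 2 := by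
    have he : (fun t : ℝ => δ * t * ‖Δ‖ ^ 2) = fun t : ℝ => (δ * ‖Δ‖ ^ 2) * t := by
      funext t; ring
    rw [he, intervalIntegral.integral_const_mul, integral_id]
    ring
  rw [hval]

theorem stmt_8 {d n : ℕ} (hn : 0 < n) (f : Fin n → EuclideanSpace ℝ (Fin d) → ℝ)
    (hf : ∀ i, ContDiff ℝ 1 (f i)) (δB lam : ℝ) (hδ : 0 ≤ δB) (hlam : δB ≤ lam)
    (fbar : EuclideanSpace ℝ (Fin d) → ℝ)
    (hfbar : fbar = fun x => (1 / (n : ℝ)) * ∑ i, f i x)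
    (hBHD : ∀ i, ∀ x y,
      ‖(gradient (f i) x - gradient fbar x) - (gradient (f i) y - gradient fbar y)‖
        ≤ δB * ‖x - y‖)
    (xr : EuclideanSpace ℝ (Fin d)) (i : Fin n)
    (F : EuclideanSpace ℝ (Fin d) → ℝ)
    (hF : F = fun z => f i z
        - (inner ℝ z (gradient (f i) xr - gradient fbar xr) : ℝ)
        + lam / 2 * ‖z - xr‖ ^ 2)
    (xnext : EuclideanSpace ℝ (Fin d)) (hdec : F xnext ≤ F xr) :
    fbar xnext + (lam - δB) / 2 * ‖xnext - xr‖ ^ 2 ≤ fbar xr := by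
  have hfb : ContDiff ℝ 1 fbar := by
    rw [hfbar]
    exact contDiff_const.mul (ContDiff.sum fun j _ => hf j)
  set g : EuclideanSpace ℝ (Fin d) → ℝ := fun z => f i z - fbar z with hg_def
  set g' : EuclideanSpace ℝ (Fin d) → EuclideanSpace ℝ (Fin d) :=
    fun z => gradient (f i) z - gradient fbar z with hg'_def
  have hg : ∀ z, HasGradientAt g (g' z) z := by
    intro z
    have h1 : HasGradientAt (f i) (gradient (f i) z) z :=
      ((hf i).differentiable one_ne_zero z).hasGradientAt
    have h2 : HasGradientAt fbar (gradient fbar z) z :=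
      (hfb.differentiable one_ne_zero z).hasGradientAt
    rw [hasGradientAt_iff_hasFDerivAt] at h1 h2 ⊢
    rw [hg'_def, map_sub]
    exact h1.sub h2
  have hT := taylor_bound g g' hg δB hδ (hBHD i) xr xnext
  have hT' := (abs_le.mp hT).1
  have hd : f i xnext - (inner ℝ xnext (g' xr) : ℝ) + lam / 2 * ‖xnext - xr‖ ^ 2
      ≤ f i xr - (inner ℝ xr (g' xr) : ℝ) := by
    have h := hdec
    rw [hF] at h
    simpa [hg'_def] using h
  have hinner : (inner ℝ xnext (g' xr) : ℝ) - (inner ℝ xr (g' xr) : ℝ)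
      = (inner ℝ (g' xr) (xnext - xr) : ℝ) := by
    rw [← inner_sub_left, real_inner_comm]
  have hfb1 : fbar xnext = f i xnext - g xnext := by simp [hg_def]
  have hfb2 : fbar xr = f i xr - g xr := by simp [hg_def]
  linarith
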